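/- The Benjamini–Hochberg selection rule is simple: fix a level q ∈ (0,1), a vector of p-values p ∈ [0,1]^m, and suppose hypothesis j is rejected by the BH procedure at level q. If the coordinates of p other than p_j are held fixed and p_j is replaced by any value p'_j such that j is still rejected by BH, then the total number of BH rejections is unchanged. -/

import Mathlib

open Classical in
/-- The number of rejections of the Benjamini–Hochberg procedure at level `q` on
`p ∈ [0,1]^m`: `R = max { r : p_{(r)} ≤ r·q/m }` (with `R = 0` if the set is
empty), where `p_{(j+1)} = p (Tuple.sort p j)` is the `(j+1)`-st order statistic. -/
noncomputable def bhCount (m : ℕ) (q : ℝ) (p : Fin m → ℝ) : ℕ :=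
  (Finset.univ.filter
      (fun j : Fin m => p (Tuple.sort p j) ≤ ((j : ℕ) + 1) * q / m)).sup
    (fun j => (j : ℕ) + 1)

/-- BH rejects hypothesis `j` iff `p j ≤ R·q/m` where `R` is the number of
rejections. -/
def bhRejects (m : ℕ) (q : ℝ) (p : Fin m → ℝ) (j : Fin m) : Prop :=
  p j ≤ (bhCount m q p : ℝ) * q / m

private lemma sort_le_iff {m : ℕ} (p : Fin m → ℝ) (j : Fin m) (t : ℝ) :
    p (Tuple.sort p j) ≤ t ↔ (j : ℕ) + 1 ≤ Fintype.card {i // p i ≤ t} := by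
  have hc : Fintype.card {i // (p ∘ Tuple.sort p) i ≤ t} = Fintype.card {i // p i ≤ t} :=
    Fintype.card_congr (Equiv.subtypeEquiv (Tuple.sort p) (fun a => Iff.rfl))
  have h := (Tuple.lt_card_le_iff_apply_le_of_monotone (f := p ∘ Tuple.sort p) (a := t)
    (j := j) (Tuple.monotone_sort p)).symm
  rw [← Fintype.card_subtype, hc] at h
  rw [Nat.lt_iff_add_one_le] at h
  exact h

open Classical in
private lemma bhCount_eq (m : ℕ) (q : ℝ) (p : Fin m → ℝ) :
    bhCount m q p =
      (Finset.univ.filter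
        (fun j : Fin m => (j : ℕ) + 1 ≤ Fintype.card {i // p i ≤ ((j : ℕ) + 1) * q / m})).sup
        (fun j => (j : ℕ) + 1) := by
  unfold bhCount
  refine Finset.sup_congr ?_ (fun _ _ => rfl)
  refine Finset.filter_congr (fun j _ => ?_)
  exact sort_le_iff p j _

private lemma bh_key (m : ℕ) (q : ℝ) (hq0 : 0 < q) (p p' : Fin m → ℝ)
    (j : Fin m) (h0 : 0 ≤ p j) (hfix : ∀ i, i ≠ j → p' i = p i)
    (hpj : p j ≤ (bhCount m q p : ℝ) * q / m)
    (hpj' : p' j ≤ (bhCount m q p : ℝ) * q / m) :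
    bhCount m q p' = bhCount m q p := by
  classical
  have hm : 0 < m := j.pos
  have hmR : (0 : ℝ) < m := by exact_mod_cast hm
  set R := bhCount m q p with hRdef
  -- R ≥ 1
  have hR1 : 1 ≤ R := by
    by_contra hc
    have hR0 : R = 0 := by omega
    have hpj0 : p j = 0 := by
      rw [hR0] at hpj
      simp at hpj
      linarith [hpj, h0]
    have hmem : (⟨0, hm⟩ : Fin m) ∈ Finset.univ.filter
        (fun j' : Fin m => (j' : ℕ) + 1 ≤
          Fintype.card {i // p i ≤ ((j' : ℕ) + 1) * q / m}) := by
      simp only [Finset.mem_filter, Finset.mem_univ, true_and]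
      have hjmem : p j ≤ ((0 : ℕ) + 1) * q / m := by
        rw [hpj0]; positivity
      have : 0 < Fintype.card {i // p i ≤ ((0 : ℕ) + 1) * q / m} :=
        Fintype.card_pos_iff.2 ⟨⟨j, hjmem⟩⟩
      simpa [Nat.one_le_iff_ne_zero, Nat.pos_iff_ne_zero] using this
    have := Finset.le_sup (f := fun j' : Fin m => (j' : ℕ) + 1) hmem
    rw [← bhCount_eq] at this
    simp at this
    omega
  -- R ≤ m
  have hRm : R ≤ m := by
    rw [hRdef, bhCount_eq]
    refine Finset.sup_le (fun j' _ => ?_)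
    exact j'.isLt
  -- card bound for p at level R
  have hcard : R ≤ Fintype.card {i // p i ≤ (R : ℝ) * q / m} := by
    have hne : (Finset.univ.filter
        (fun j' : Fin m => (j' : ℕ) + 1 ≤
          Fintype.card {i // p i ≤ ((j' : ℕ) + 1) * q / m})).Nonempty := by
      rw [Finset.nonempty_iff_ne_empty]
      intro hemp
      have : R = 0 := by rw [hRdef, bhCount_eq, hemp]; simp
      omega
    obtain ⟨j0, hj0mem, hj0⟩ := Finset.exists_mem_eq_sup _ hne
      (fun j' : Fin m => (j' : ℕ) + 1)
    rw [← bhCount_eq, ← hRdef] at hj0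
    simp only [Finset.mem_filter, Finset.mem_univ, true_and] at hj0mem
    rw [hj0]
    have : (((j0 : ℕ) + 1 : ℕ) : ℝ) = ((j0 : ℕ) : ℝ) + 1 := by push_cast; ring
    rw [← hj0] at hj0mem
    convert hj0mem using 4
    rw [hj0]; push_cast; ring
  -- counts agree above level R
  have hsame : ∀ r : ℕ, R ≤ r →
      Fintype.card {i // p' i ≤ (r : ℝ) * q / m} =
        Fintype.card {i // p i ≤ (r : ℝ) * q / m} := by
    intro r hr
    have hle : (R : ℝ) * q / m ≤ (r : ℝ) * q / m := by
      have : (R : ℝ) ≤ (r : ℝ) := by exact_mod_cast hr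
      gcongr
    refine Fintype.card_congr (Equiv.subtypeEquiv (Equiv.refl _) (fun i => ?_))
    simp only [Equiv.refl_apply]
    by_cases hij : i = j
    · subst hij
      constructor <;> intro _ <;> linarith
    · rw [hfix i hij]
  -- upper bound
  have hub : bhCount m q p' ≤ R := by
    rw [bhCount_eq]
    refine Finset.sup_le (fun j' hj' => ?_)
    simp only [Finset.mem_filter, Finset.mem_univ, true_and] at hj'
    by_contra hc
    have hRle : R ≤ (j' : ℕ) + 1 := by omega
    rw [show (((j' : ℕ) : ℝ) + 1) = (((j' : ℕ) + 1 : ℕ) : ℝ) by push_cast; ring,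
      hsame _ hRle] at hj'
    have hmem : j' ∈ Finset.univ.filter
        (fun j'' : Fin m => (j'' : ℕ) + 1 ≤
          Fintype.card {i // p i ≤ ((j'' : ℕ) + 1) * q / m}) := by
      simp only [Finset.mem_filter, Finset.mem_univ, true_and]
      convert hj' using 3
      push_cast; ring
    have := Finset.le_sup (f := fun j'' : Fin m => (j'' : ℕ) + 1) hmem
    rw [← bhCount_eq, ← hRdef] at this
    have h2 : (j' : ℕ) + 1 ≤ R := by simpa using this
    omega
  -- lower bound
  have hlb : R ≤ bhCount m q p' := by
    rw [bhCount_eq]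
    have hlt : R - 1 < m := by omega
    have hmem : (⟨R - 1, hlt⟩ : Fin m) ∈ Finset.univ.filter
        (fun j' : Fin m => (j' : ℕ) + 1 ≤
          Fintype.card {i // p' i ≤ ((j' : ℕ) + 1) * q / m}) := by
      simp only [Finset.mem_filter, Finset.mem_univ, true_and]
      have hsub : (R - 1) + 1 = R := by omega
      have hcast : (((R - 1 : ℕ) : ℝ) + 1) = ((R : ℕ) : ℝ) := by
        rw [show ((R - 1 : ℕ) : ℝ) + 1 = (((R - 1) + 1 : ℕ) : ℝ) by push_cast; ring, hsub]
      calc ((⟨R - 1, hlt⟩ : Fin m) : ℕ) + 1 = R := hsub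
        _ ≤ Fintype.card {i // p i ≤ (R : ℝ) * q / m} := hcard
        _ = Fintype.card {i // p' i ≤ (R : ℝ) * q / m} := (hsame R le_rfl).symm
        _ = _ := by rw [hcast]
    have := Finset.le_sup (f := fun j' : Fin m => (j' : ℕ) + 1) hmem
    simpa [Nat.sub_add_cancel hR1] using this
  omega

/-- The BH selection rule is *simple*: if hypothesis `j` is rejected at level `q`,
and `p j` is changed to any value such that `j` is still rejected while all other
p-values are held fixed, then the total number of rejections is unchanged. -/
theorem stmt6 (m : ℕ) (q : ℝ) (hq : q ∈ Set.Ioo (0 : ℝ) 1) (p p' : Fin m → ℝ)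
    (hp : ∀ i, p i ∈ Set.Icc (0 : ℝ) 1) (hp' : ∀ i, p' i ∈ Set.Icc (0 : ℝ) 1)
    (j : Fin m) (hfix : ∀ i, i ≠ j → p' i = p i)
    (hrej : bhRejects m q p j) (hrej' : bhRejects m q p' j) :
    bhCount m q p' = bhCount m q p := by
  have hq0 : 0 < q := hq.1
  have hm : 0 < m := j.pos
  have hmR : (0 : ℝ) < m := by exact_mod_cast hm
  unfold bhRejects at hrej hrej'
  by_cases hcase : p' j ≤ (bhCount m q p : ℝ) * q / m
  · exact bh_key m q hq0 p p' j (hp j).1 hfix hrej hcase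
  · -- then bhCount p < bhCount p'
    push_neg at hcase
    have hRR : (bhCount m q p : ℝ) * q / m ≤ (bhCount m q p' : ℝ) * q / m := by
      linarith
    have hpjle : p j ≤ (bhCount m q p' : ℝ) * q / m := le_trans hrej hRR
    exact (bh_key m q hq0 p' p j (hp' j).1 (fun i hi => (hfix i hi).symm) hrej' hpjle).symm
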